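/- arXiv:1402.0461 — 2 statements merged into one kernel-verified Lean document; each statement's English description precedes it below -/
import Mathlib

section
/- Let x₁ < … < x_N be the Gauss–Lobatto–Legendre nodes on [-1,1], ω_n the corresponding quadrature weights, l_m the Lagrange interpolation polynomials, D the differentiation matrix D_{nm} = l_m'(x_n), and H = diag(ω_n). If the quadrature ∑ u(x_n)ω_n is exact for all polynomials of degree ≤ 2N-3, then DᵀH + HD = Q where Q = diag(-1, 0, …, 0, 1). -/
open Matrix Polynomial

/-- Let x₁ < … < x_N be the GLL nodes on [-1,1] (so x₁ = -1,
x_N = 1), ω_n the quadrature weights, l_m the Lagrange polynomials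
(degree ≤ N-1, l_m(x_n) = δ_{mn}), D the differentiation matrix
D_{nm} = l_m'(x_n), and H = diag(ω_n). If the quadrature ∑ u(x_n)ω_n is exact
for all polynomials of degree ≤ 2N-3, then DᵀH + HD = Q = diag(-1,0,…,0,1). -/
theorem stmt5 (n : ℕ) (N : ℕ) (hN : N = n + 2)
    (x : Fin (n + 2) → ℝ) (hmono : StrictMono x)
    (hx0 : x 0 = -1) (hxN : x (Fin.last (n + 1)) = 1)
    (ω : Fin (n + 2) → ℝ)
    (L : Fin (n + 2) → Polynomial ℝ)
    (hLdeg : ∀ m, (L m).natDegree ≤ N - 1)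
    (hLδ : ∀ m k : Fin (n + 2), (L m).eval (x k) = if k = m then 1 else 0)
    (hquad : ∀ p : Polynomial ℝ, p.natDegree ≤ 2 * N - 3 →
      (∑ k, p.eval (x k) * ω k) = ∫ t in (-1 : ℝ)..1, p.eval t)
    (D H : Matrix (Fin (n + 2)) (Fin (n + 2)) ℝ)
    (hD : ∀ k m, D k m = (Polynomial.derivative (L m)).eval (x k))
    (hH : H = Matrix.diagonal ω) :
    Dᵀ * H + H * D =
      Matrix.diagonal (fun i : Fin (n + 2) =>
        if i = 0 then (-1 : ℝ) else if i = Fin.last (n + 1) then 1 else 0) := by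
  subst hH hN
  ext i j
  -- degree bound
  have hdeg : (derivative (L i * L j)).natDegree ≤ 2 * (n + 2) - 3 := by
    have h1 := Polynomial.natDegree_mul_le (p := L i) (q := L j)
    have h2 := Polynomial.natDegree_derivative_le (L i * L j)
    have h3 := hLdeg i
    have h4 := hLdeg j
    omega
  have hq := hquad _ hdeg
  -- evaluate the sum
  have hsum : (∑ k, (derivative (L i * L j)).eval (x k) * ω k)
      = (derivative (L i)).eval (x j) * ω j + (derivative (L j)).eval (x i) * ω i := by
    have hterm : ∀ k, (derivative (L i * L j)).eval (x k) * ω k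
        = (if k = j then (derivative (L i)).eval (x k) * ω k else 0)
          + (if k = i then (derivative (L j)).eval (x k) * ω k else 0) := by
      intro k
      rw [Polynomial.derivative_mul, Polynomial.eval_add, Polynomial.eval_mul,
        Polynomial.eval_mul, hLδ j k, hLδ i k]
      by_cases h1 : k = j <;> by_cases h2 : k = i <;> simp [h1, h2] <;> split_ifs <;> ring
    rw [Finset.sum_congr rfl (fun k _ => hterm k), Finset.sum_add_distrib,
      Finset.sum_ite_eq' Finset.univ j, Finset.sum_ite_eq' Finset.univ i]
    simp
  -- evaluate the integral
  have hint : (∫ t in (-1:ℝ)..1, (derivative (L i * L j)).eval t)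
      = (L i * L j).eval 1 - (L i * L j).eval (-1) := by
    refine intervalIntegral.integral_eq_sub_of_hasDerivAt
      (fun t _ => Polynomial.hasDerivAt (L i * L j) t) ?_
    exact ((L i * L j).derivative.continuous_aeval).intervalIntegrable _ _
  have key : (derivative (L i)).eval (x j) * ω j + (derivative (L j)).eval (x i) * ω i
      = (L i * L j).eval 1 - (L i * L j).eval (-1) := by
    rw [← hsum, ← hint, hq]
  rw [show ((-1):ℝ) = x 0 from hx0.symm] at key
  rw [show ((1):ℝ) = x (Fin.last (n+1)) from hxN.symm] at key
  rw [Polynomial.eval_mul, Polynomial.eval_mul, hLδ i, hLδ j, hLδ i, hLδ j] at key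
  -- compute matrix entries
  rw [Matrix.add_apply, Matrix.mul_diagonal, Matrix.diagonal_mul, Matrix.transpose_apply,
    Matrix.diagonal_apply, hD, hD]
  have h0last : (0 : Fin (n + 2)) ≠ Fin.last (n + 1) := by
    simp [Fin.ext_iff]
  by_cases hij : i = j
  · subst hij
    by_cases h0 : i = 0
    · subst h0
      simp [h0last, h0last.symm] at key ⊢
      linarith
    · by_cases hl : i = Fin.last (n + 1)
      · subst hl
        simp [h0last, h0last.symm] at key ⊢
        linarith
      · have h0' : (0 : Fin (n+2)) ≠ i := fun h => h0 h.symm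
        have hl' : Fin.last (n+1) ≠ i := fun h => hl h.symm
        simp [h0, hl, h0', hl'] at key
        simp only [Matrix.diagonal_apply_eq, h0, hl, if_false, ite_false]
        rcases key with h | h <;> simp [h]
  · have h1 : ¬(Fin.last (n + 1) = i ∧ Fin.last (n + 1) = j) := by
      rintro ⟨a, b⟩; exact hij (a ▸ b)
    have h2 : ¬((0 : Fin (n+2)) = i ∧ (0 : Fin (n+2)) = j) := by
      rintro ⟨a, b⟩; exact hij (a ▸ b)
    simp [hij]
    rcases Decidable.not_and_iff_or_not.mp h1 with hA | hA <;>
    rcases Decidable.not_and_iff_or_not.mp h2 with hB | hB <;>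
      simp [hA, hB] at key <;> linarith
end

section
/- Continuity of the interface factor: let x(ξ) be a C¹ diffeomorphism on each of two adjacent blocks with common face Γ = {ξ_l = const}, with transformations agreeing on Γ in the tangential directions. Let T = (∂ξ/∂x), J = det(∂x/∂ξ), T_{(l)} = ±|∇_x ξ_l|. Then J^{-1}|T_{(l)}|^{-1} = |ν_{lj} a_{lj}| where a_{lj} are the cofactors of (∂ξ/∂x), ν the unit normal of Γ, and consequently J^{-1}|T_{(l)}^{-1}| takes the same value on Γ computed from either block. -/
open Matrix

/-- The (l,j) cofactor of a 3×3 matrix: (-1)^{l+j} times the (l,j) minor. -/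
noncomputable def cof3' (T : Matrix (Fin 3) (Fin 3) ℝ) (l j : Fin 3) : ℝ :=
  (-1) ^ ((l : ℕ) + (j : ℕ)) * (T.submatrix l.succAbove j.succAbove).det

lemma cof3'_expand (A : Matrix (Fin 3) (Fin 3) ℝ) (l : Fin 3) :
    A.det = ∑ j, A l j * cof3' A l j := by
  rw [Matrix.det_succ_row A l]
  refine Finset.sum_congr rfl fun j _ => ?_
  simp [cof3']; ring

lemma part1 (S : Matrix (Fin 3) (Fin 3) ℝ) (l : Fin 3) (h : 0 < S.det) :
    (S.det)⁻¹ * (Real.sqrt (∑ j, (S⁻¹ l j) ^ 2))⁻¹ =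
      |∑ j, (S⁻¹ l j / Real.sqrt (∑ j', (S⁻¹ l j') ^ 2)) * cof3' S⁻¹ l j| := by
  have hdet : (S⁻¹).det = (S.det)⁻¹ := by
    rw [Matrix.det_nonsing_inv, Ring.inverse_eq_inv']
  set r := Real.sqrt (∑ j', (S⁻¹ l j') ^ 2) with hr
  have hsum : ∑ j, (S⁻¹ l j / r) * cof3' S⁻¹ l j = (S.det)⁻¹ / r := by
    rw [← hdet, cof3'_expand S⁻¹ l, Finset.sum_div]
    exact Finset.sum_congr rfl fun j _ => by ring
  rw [hsum, abs_div, abs_of_pos (inv_pos.2 h), abs_of_nonneg (Real.sqrt_nonneg _),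
    div_eq_mul_inv]

/-- Continuity of the interface factor. Let S⁻, S⁺ be the
Jacobian matrices ∂x/∂ξ of the coordinate transformations of two adjacent
blocks evaluated at a common point of the interface Γ = {ξ_l = const}, with
positive determinants J^± = det S^±, and suppose the tangential derivatives
agree: the columns of S⁻ and S⁺ with index m ≠ l coincide. Let T^± = (S^±)⁻¹,
T_{(l)}^± = |∇_x ξ_l| = √(∑_j (T^±_{lj})²), ν_{lj} = T_{lj}/T_{(l)} the unit
normal, and a_{lj} the cofactors of T. Then
J⁻¹·|T_{(l)}|⁻¹ = |∑_j ν_{lj} a_{lj}| (computed in either block), and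
consequently the factor J⁻¹|T_{(l)}⁻¹| takes the same value on Γ computed
from either block. -/
theorem stmt18 (Sm Sp : Matrix (Fin 3) (Fin 3) ℝ) (l : Fin 3)
    (hJm : 0 < Sm.det) (hJp : 0 < Sp.det)
    (hcols : ∀ m : Fin 3, m ≠ l → ∀ j : Fin 3, Sm j m = Sp j m) :
    ((Sm.det)⁻¹ * (Real.sqrt (∑ j, (Sm⁻¹ l j) ^ 2))⁻¹ =
      |∑ j, (Sm⁻¹ l j / Real.sqrt (∑ j', (Sm⁻¹ l j') ^ 2)) * cof3' Sm⁻¹ l j|) ∧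
    ((Sp.det)⁻¹ * (Real.sqrt (∑ j, (Sp⁻¹ l j) ^ 2))⁻¹ =
      |∑ j, (Sp⁻¹ l j / Real.sqrt (∑ j', (Sp⁻¹ l j') ^ 2)) * cof3' Sp⁻¹ l j|) ∧
    (Sm.det)⁻¹ * (Real.sqrt (∑ j, (Sm⁻¹ l j) ^ 2))⁻¹ =
      (Sp.det)⁻¹ * (Real.sqrt (∑ j, (Sp⁻¹ l j) ^ 2))⁻¹ := by
  refine ⟨part1 Sm l hJm, part1 Sp l hJp, ?_⟩
  -- the adjugate entries in row l agree
  have hadj : ∀ j, Sm.adjugate l j = Sp.adjugate l j := by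
    intro j
    rw [Matrix.adjugate_fin_succ_eq_det_submatrix, Matrix.adjugate_fin_succ_eq_det_submatrix]
    congr 1
    apply congrArg Matrix.det
    ext a b
    exact hcols _ (Fin.succAbove_ne l b) _
  have key : ∀ (S : Matrix (Fin 3) (Fin 3) ℝ), 0 < S.det →
      (S.det)⁻¹ * (Real.sqrt (∑ j, (S⁻¹ l j) ^ 2))⁻¹ =
      (Real.sqrt (∑ j, (S.adjugate l j) ^ 2))⁻¹ := by
    intro S h
    have hinv : ∀ j, S⁻¹ l j = (S.det)⁻¹ * S.adjugate l j := by
      intro j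
      rw [Matrix.inv_def, Ring.inverse_eq_inv', Matrix.smul_apply, smul_eq_mul]
    have h1 : ∑ j, (S⁻¹ l j) ^ 2 = ((S.det)⁻¹) ^ 2 * ∑ j, (S.adjugate l j) ^ 2 := by
      rw [Finset.mul_sum]
      exact Finset.sum_congr rfl fun j _ => by rw [hinv j]; ring
    have hdpos : 0 < (S.det)⁻¹ := inv_pos.2 h
    rw [h1, Real.sqrt_mul (sq_nonneg _), Real.sqrt_sq hdpos.le, mul_inv,
      ← mul_assoc, mul_inv_cancel₀ hdpos.ne', one_mul]
  rw [key Sm hJm, key Sp hJp]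
  congr 2
  exact Finset.sum_congr rfl fun j _ => by rw [hadj j]
end
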